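/- Let {s_k} be a nonincreasing sequence of nonnegative reals converging to 0 and ζ > 1, ν > 0 constants with s_k^ζ ≤ ν(s_k - s_{k+1}) for all sufficiently large k. Then there exists ς > 0 such that s_k ≤ ς k^{-1/(ζ-1)} for all sufficiently large k. -/
import Mathlib


open Filter

/-- Key slope inequality: for `0 < y ≤ x` and `q > 0`,
`q * x ^ (-q-1) * (x - y) ≤ y ^ (-q) - x ^ (-q)`. -/
lemma key_slope {x y q : ℝ} (hy : 0 < y) (hxy : y ≤ x) (hq : 0 < q) :
    q * x ^ (-q - 1) * (x - y) ≤ y ^ (-q) - x ^ (-q) := by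
  rcases eq_or_lt_of_le hxy with rfl | hlt
  · simp
  have hx : 0 < x := hy.trans hlt
  obtain ⟨c, hc, hceq⟩ := exists_hasDerivAt_eq_slope (fun t => t ^ (-q))
      (fun t => (-q) * t ^ (-q - 1)) hlt
      (by
        apply ContinuousOn.rpow_const continuousOn_id
        intro t ht
        exact Or.inl (ne_of_gt (lt_of_lt_of_le hy ht.1)))
      (by
        intro t ht
        have ht0 : t ≠ 0 := ne_of_gt (hy.trans ht.1)
        simpa using Real.hasDerivAt_rpow_const (p := -q) (Or.inl ht0))
  have hc0 : 0 < c := hy.trans hc.1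
  have hslope : y ^ (-q) - x ^ (-q) = q * c ^ (-q - 1) * (x - y) := by
    have hxy' : x - y ≠ 0 := sub_ne_zero.mpr (ne_of_gt hlt)
    field_simp at hceq
    nlinarith [hceq]
  rw [hslope]
  have hcle : x ^ (-q - 1) ≤ c ^ (-q - 1) :=
    Real.rpow_le_rpow_of_nonpos hc0 hc.2.le (by linarith)
  have hxy0 : 0 ≤ x - y := by linarith
  have := mul_le_mul_of_nonneg_right (mul_le_mul_of_nonneg_left hcle hq.le) hxy0
  linarith

/-- Łojasiewicz-type recursion, case `ζ > 1`: if `s` is nonnegative, nonincreasing,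
converges to `0`, and `s k ^ ζ ≤ ν * (s k - s (k+1))` for all large `k`, then there is
`ς > 0` with `s k ≤ ς * k ^ (-1/(ζ-1))` for all sufficiently large `k`. -/
theorem lojasiewicz_recursion_sublinear (s : ℕ → ℝ) (ζ ν : ℝ) (hζ : 1 < ζ) (hν : 0 < ν)
    (hs : ∀ k, 0 ≤ s k) (hmono : ∀ k, s (k + 1) ≤ s k) (hlim : Tendsto s atTop (nhds 0))
    (hrec : ∃ K₀ : ℕ, ∀ k ≥ K₀, s k ^ ζ ≤ ν * (s k - s (k + 1))) :
    ∃ ς > (0 : ℝ), ∃ K : ℕ, ∀ k ≥ K, s k ≤ ς * (k : ℝ) ^ (-(1 / (ζ - 1))) := by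
  obtain ⟨K₀, hrec⟩ := hrec
  have hmono' : ∀ m n, m ≤ n → s n ≤ s m := fun m n h => by
    induction n with
    | zero => simpa [Nat.le_zero.mp h]
    | succ n ih =>
        rcases Nat.lt_or_ge m (n + 1) with h' | h'
        · exact (hmono n).trans (ih (Nat.lt_succ_iff.mp h'))
        · have : m = n + 1 := le_antisymm h h'
          simp [this]
  by_cases hzero : ∃ N ≥ K₀, s N = 0
  · obtain ⟨N, _, hN⟩ := hzero
    refine ⟨1, one_pos, N, fun k hk => ?_⟩
    have h1 : s k ≤ 0 := by rw [← hN]; exact hmono' N k hk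
    have h2 : (0 : ℝ) ≤ (k : ℝ) ^ (-(1 / (ζ - 1))) := Real.rpow_nonneg (Nat.cast_nonneg k) _
    linarith
  push_neg at hzero
  have hpos : ∀ k ≥ K₀, 0 < s k := fun k hk => lt_of_le_of_ne (hs k) (Ne.symm (hzero k hk))
  set q : ℝ := ζ - 1 with hqdef
  have hq : 0 < q := by simp [hqdef]; linarith
  set c : ℝ := q / ν with hcdef
  have hc : 0 < c := div_pos hq hν
  -- increments of t k = s k ^ (-q)
  have hstep : ∀ k ≥ K₀, s k ^ (-q) + c ≤ s (k + 1) ^ (-q) := by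
    intro k hk
    have hk1 : 0 < s (k + 1) := hpos (k + 1) (le_trans hk (Nat.le_succ k))
    have hk0 : 0 < s k := hpos k hk
    have hkey := key_slope hk1 (hmono k) hq
    have hd : s k ^ ζ ≤ ν * (s k - s (k + 1)) := hrec k hk
    have hzz : s k ^ (-q - 1) * s k ^ ζ = 1 := by
      rw [← Real.rpow_add hk0]
      have : -q - 1 + ζ = 0 := by rw [hqdef]; ring
      rw [this, Real.rpow_zero]
    have hpows : 0 < s k ^ (-q - 1) := Real.rpow_pos_of_pos hk0 _
    have h1 : c * (s k ^ (-q - 1) * s k ^ ζ) ≤ q * s k ^ (-q - 1) * (s k - s (k + 1)) := by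
      rw [hcdef, div_mul_eq_mul_div, div_le_iff₀ hν]
      nlinarith [mul_le_mul_of_nonneg_left hd (mul_nonneg hq.le hpows.le)]
    rw [hzz, mul_one] at h1
    linarith
  -- by induction: s (K₀ + m) ^ (-q) ≥ m * c
  have hind : ∀ m : ℕ, (m : ℝ) * c ≤ s (K₀ + m) ^ (-q) := by
    intro m
    induction m with
    | zero =>
        simp
        exact (Real.rpow_pos_of_pos (hpos K₀ le_rfl) _).le
    | succ m ih =>
        have := hstep (K₀ + m) (Nat.le_add_right _ _)
        push_cast
        have : s (K₀ + m) ^ (-q) + c ≤ s (K₀ + (m + 1)) ^ (-q) := by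
          rw [← Nat.add_assoc]; exact this
        linarith
  refine ⟨(c / 2) ^ (-(1 / q)), Real.rpow_pos_of_pos (by linarith) _, 2 * K₀ + 2, fun k hk => ?_⟩
  have hkK : K₀ ≤ k := by omega
  have hk2 : (2 * K₀ : ℝ) ≤ (k : ℝ) := by exact_mod_cast (by omega : 2 * K₀ ≤ k)
  have hk0 : (0 : ℝ) < (k : ℝ) := by
    have : (2 : ℕ) ≤ k := by omega
    exact_mod_cast Nat.lt_of_lt_of_le (by norm_num) this
  -- t k ≥ (k - K₀) * c ≥ (k/2) * c
  have h1 : ((k - K₀ : ℕ) : ℝ) * c ≤ s k ^ (-q) := by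
    have := hind (k - K₀)
    rwa [Nat.add_sub_cancel' hkK] at this
  have h2 : (k : ℝ) / 2 * c ≤ s k ^ (-q) := by
    have : (k : ℝ) / 2 ≤ ((k - K₀ : ℕ) : ℝ) := by
      rw [Nat.cast_sub hkK]
      push_cast
      linarith
    nlinarith
  have hA : (0 : ℝ) < c / 2 * (k : ℝ) := by positivity
  have hsk : 0 < s k := hpos k hkK
  -- from s k ^ (-q) ≥ A deduce s k ≤ A ^ (-(1/q))
  have h3 : s k ≤ (c / 2 * (k : ℝ)) ^ (-(1 / q)) := by
    have h2' : c / 2 * (k : ℝ) ≤ s k ^ (-q) := by linarith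
    have h4 : (s k ^ (-q)) ^ (-(1 / q)) ≤ (c / 2 * (k : ℝ)) ^ (-(1 / q)) :=
      Real.rpow_le_rpow_of_nonpos hA h2' (neg_nonpos.mpr (by positivity))
    have hqq : (-q) * (-(1 / q)) = 1 := by field_simp
    have h5 : (s k ^ (-q)) ^ (-(1 / q)) = s k := by
      rw [← Real.rpow_mul hsk.le, hqq, Real.rpow_one]
    rw [← h5]
    exact h4
  calc s k ≤ (c / 2 * (k : ℝ)) ^ (-(1 / q)) := h3
    _ = (c / 2) ^ (-(1 / q)) * (k : ℝ) ^ (-(1 / (ζ - 1))) := by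
        rw [Real.mul_rpow (by linarith) hk0.le, hqdef]
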